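/- For every integer n with 1 ≤ n ≤ 7 and every freely reduced word w in F₂ of length at most 7 with zero exponent sum on x, if the presentation MS(n, w) = (x⁻¹yⁿxy⁻⁽ⁿ⁺¹⁾, x⁻¹w) has total length strictly less than 14 (where the second relator x⁻¹w is taken freely reduced), then MS(n, w) is AC-trivial. -/

import Mathlib

/-- The free group on two generators `x`, `y`. -/
abbrev F2 : Type := FreeGroup (Fin 2)

def x : F2 := FreeGroup.of 0
def y : F2 := FreeGroup.of 1

/-- A single AC-move on a balanced presentation `(r₁, r₂)`:
replace `r₁` by `r₁ r₂^{±1}`, or `r₂` by `r₂ r₁^{±1}`, or some `rᵢ` by `rᵢ⁻¹`,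
or some `rᵢ` by `g rᵢ g⁻¹` with `g ∈ {x, y, x⁻¹, y⁻¹}`. -/
def ACMove (p q : F2 × F2) : Prop :=
  q = (p.1 * p.2, p.2) ∨ q = (p.1 * p.2⁻¹, p.2) ∨
  q = (p.1, p.2 * p.1) ∨ q = (p.1, p.2 * p.1⁻¹) ∨
  q = (p.1⁻¹, p.2) ∨ q = (p.1, p.2⁻¹) ∨
  ∃ g : F2, (g = x ∨ g = y ∨ g = x⁻¹ ∨ g = y⁻¹) ∧
    (q = (g * p.1 * g⁻¹, p.2) ∨ q = (p.1, g * p.2 * g⁻¹))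

/-- Two balanced presentations are AC-equivalent if one can be transformed into the
other by a finite sequence of AC-moves. -/
def ACEquiv : F2 × F2 → F2 × F2 → Prop := Relation.ReflTransGen ACMove

/-- The length of a presentation: the sum of the word lengths of the two relators. -/
def presLength (p : F2 × F2) : ℕ := p.1.norm + p.2.norm

/-- The exponent sum on `x`: the `x`-coordinate of the abelianization. -/
def expSumX : F2 →* Multiplicative ℤ :=
  FreeGroup.lift (fun i => if i = 0 then Multiplicative.ofAdd (1 : ℤ) else 1)

/-- The Akbulut–Kirby presentation AK(3) = ⟨x, y ∣ x³ = y⁴, xyx = yxy⟩. -/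
def AK3 : F2 × F2 := (x ^ 3 * (y ^ 4)⁻¹, x * y * x * y⁻¹ * x⁻¹ * y⁻¹)

namespace ACA

open FreeGroup List

abbrev W := List (Fin 2 × Bool)

/-! ### Words over `ℕ`-letters: 0 = x, 1 = y, 2 = x⁻¹, 3 = y⁻¹ -/

def ninv1 (c : ℕ) : ℕ := (c + 2) % 4

def nred : List ℕ → List ℕ
  | [] => []
  | c :: t =>
    match nred t with
    | [] => [c]
    | d :: t2 => if d = ninv1 c then t2 else c :: d :: t2

def ninvRev (l : List ℕ) : List ℕ := (l.map ninv1).reverse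

def ofN (c : ℕ) : Fin 2 × Bool := (if c % 2 = 0 then 0 else 1, c < 2)

def ofNW (l : List ℕ) : W := l.map ofN

def toN1 (a : Fin 2 × Bool) : ℕ := (if a.1 = 0 then 0 else 1) + if a.2 then 0 else 2

def toN (L : W) : List ℕ := L.map toN1

def ok (l : List ℕ) : Prop := ∀ c ∈ l, c < 4

lemma ok_nil : ok [] := by intro c h; simp at h

lemma ok_cons {c l} (hc : c < 4) (hl : ok l) : ok (c :: l) := by
  intro e he; rcases List.mem_cons.mp he with h | h
  · exact h ▸ hc
  · exact hl e h

lemma ok_of_cons {c l} (h : ok (c :: l)) : c < 4 ∧ ok l :=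
  ⟨h c (List.mem_cons_self : c ∈ c :: l), fun e he => h e (List.mem_cons_of_mem c he)⟩

lemma ok_append {l1 l2} (h1 : ok l1) (h2 : ok l2) : ok (l1 ++ l2) := by
  intro e he; rcases List.mem_append.mp he with h | h
  · exact h1 e h
  · exact h2 e h

lemma ninv1_lt {c : ℕ} : ninv1 c < 4 := Nat.mod_lt _ (by norm_num)

lemma ok_ninvRev {l} (_ : ok l) : ok (ninvRev l) := by
  intro e he
  rw [ninvRev, List.mem_reverse, List.mem_map] at he
  obtain ⟨c, _, rfl⟩ := he
  exact ninv1_lt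

lemma nred_mem : ∀ l : List ℕ, ∀ e ∈ nred l, e ∈ l := by
  intro l
  induction l with
  | nil => intro e he; simpa [nred] using he
  | cons c t ih =>
      intro e he
      rw [nred] at he
      cases hnt : nred t with
      | nil =>
          rw [hnt] at he
          simp only [List.mem_singleton] at he
          exact he ▸ (List.mem_cons_self : c ∈ c :: t)
      | cons d t2 =>
          rw [hnt] at he
          have he : e ∈ (if d = ninv1 c then t2 else c :: d :: t2) := he
          by_cases hcd : d = ninv1 c
          · rw [if_pos hcd] at he
            exact List.mem_cons_of_mem c (ih e (hnt ▸ List.mem_cons_of_mem d he))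
          · rw [if_neg hcd] at he
            rcases List.mem_cons.mp he with h | h
            · exact h ▸ (List.mem_cons_self : c ∈ c :: t)
            · exact List.mem_cons_of_mem c (ih e (hnt ▸ h))

lemma ok_nred {l} (h : ok l) : ok (nred l) := fun e he => h e (nred_mem l e he)

lemma cond_iff {c d : ℕ} (hc : c < 4) (hd : d < 4) :
    (d = ninv1 c) ↔ ((ofN c).1 = (ofN d).1 ∧ (ofN c).2 = !(ofN d).2) := by
  interval_cases c <;> interval_cases d <;> decide

lemma ofNW_nred : ∀ l : List ℕ, ok l → ofNW (nred l) = reduce (ofNW l) := by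
  intro l
  induction l with
  | nil => intro _; rfl
  | cons c t ih =>
      intro h
      obtain ⟨hc, ht⟩ := ok_of_cons h
      have ihe := ih ht
      show ofNW (nred (c :: t)) = reduce (ofN c :: ofNW t)
      rw [reduce.cons, ← ihe, nred]
      cases hnt : nred t with
      | nil => rfl
      | cons d t2 =>
          have hd : d < 4 := ok_nred ht d (hnt ▸ (List.mem_cons_self : d ∈ d :: t2))
          show ofNW (if d = ninv1 c then t2 else c :: d :: t2) =
            if (ofN c).1 = (ofN d).1 ∧ (ofN c).2 = !(ofN d).2 then ofNW t2
            else ofN c :: ofN d :: ofNW t2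
          by_cases hcd : d = ninv1 c
          · rw [if_pos hcd, if_pos ((cond_iff hc hd).mp hcd)]
          · rw [if_neg hcd, if_neg ((cond_iff hc hd).not.mp hcd)]
            rfl

lemma mk_ofNW_nred {l : List ℕ} (h : ok l) : mk (ofNW (nred l)) = mk (ofNW l) := by
  rw [ofNW_nred l h]; exact reduce.self

lemma ofN_ninv1 {c : ℕ} (hc : c < 4) : ofN (ninv1 c) = ((ofN c).1, !(ofN c).2) := by
  interval_cases c <;> decide

lemma ofNW_ninvRev {l : List ℕ} (h : ok l) : ofNW (ninvRev l) = invRev (ofNW l) := by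
  rw [ninvRev, invRev, ofNW, ofNW, List.map_reverse, List.map_map, List.map_map]
  congr 1
  exact List.map_congr_left fun c hc => ofN_ninv1 (h c hc)

lemma ofNW_append (l1 l2 : List ℕ) : ofNW (l1 ++ l2) = ofNW l1 ++ ofNW l2 :=
  List.map_append

lemma mk_ofNW_append (l1 l2 : List ℕ) :
    mk (ofNW (l1 ++ l2)) = mk (ofNW l1) * mk (ofNW l2) := by
  rw [ofNW_append, mul_mk]

lemma mk_ofNW_ninvRev {l : List ℕ} (h : ok l) :
    mk (ofNW (ninvRev l)) = (mk (ofNW l))⁻¹ := by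
  rw [ofNW_ninvRev h, inv_mk]

/-! ### Moves -/

inductive M where
  | m1 (b : Bool) | m2 (b : Bool) | i1 | i2
  | c1 (a : Fin 4) | c2 (a : Fin 4)

def napp (p : List ℕ × List ℕ) : M → List ℕ × List ℕ
  | .m1 true  => (nred (p.1 ++ p.2), p.2)
  | .m1 false => (nred (p.1 ++ ninvRev p.2), p.2)
  | .m2 true  => (p.1, nred (p.2 ++ p.1))
  | .m2 false => (p.1, nred (p.2 ++ ninvRev p.1))
  | .i1 => (ninvRev p.1, p.2)
  | .i2 => (p.1, ninvRev p.2)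
  | .c1 a => (nred (a.val :: p.1 ++ [ninv1 a.val]), p.2)
  | .c2 a => (p.1, nred (a.val :: p.2 ++ [ninv1 a.val]))

lemma ok_napp {p : List ℕ × List ℕ} (h1 : ok p.1) (h2 : ok p.2) (m : M) :
    ok (napp p m).1 ∧ ok (napp p m).2 := by
  cases m with
  | m1 b => cases b <;>
      exact ⟨ok_nred (ok_append h1 (by first | exact h2 | exact ok_ninvRev h2)), h2⟩
  | m2 b => cases b <;>
      exact ⟨h1, ok_nred (ok_append h2 (by first | exact h1 | exact ok_ninvRev h1))⟩
  | i1 => exact ⟨ok_ninvRev h1, h2⟩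
  | i2 => exact ⟨h1, ok_ninvRev h2⟩
  | c1 a => exact ⟨ok_nred (ok_cons a.isLt (ok_append h1 (ok_cons ninv1_lt ok_nil))), h2⟩
  | c2 a => exact ⟨h1, ok_nred (ok_cons a.isLt (ok_append h2 (ok_cons ninv1_lt ok_nil)))⟩

lemma mk_single_of (a : Fin 2) : mk [(a, true)] = FreeGroup.of a := rfl

lemma mk_ofN_inv (c : ℕ) : (mk [ofN c])⁻¹ = mk [((ofN c).1, !(ofN c).2)] := by
  rw [inv_mk]; simp [invRev]

lemma ofN_eq (c : ℕ) :
    ofN c = ((0 : Fin 2), true) ∨ ofN c = ((1 : Fin 2), true) ∨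
    ofN c = ((0 : Fin 2), false) ∨ ofN c = ((1 : Fin 2), false) := by
  by_cases h : c < 2 <;> rcases Nat.mod_two_eq_zero_or_one c with h2 | h2 <;>
    simp [ofN, h, h2]

lemma mk_ofN_mem (c : ℕ) :
    mk [ofN c] = x ∨ mk [ofN c] = y ∨ mk [ofN c] = x⁻¹ ∨ mk [ofN c] = y⁻¹ := by
  have hx' : (x : F2)⁻¹ = mk [((0 : Fin 2), false)] := by
    rw [x, ← mk_single_of, inv_mk]; simp [invRev]
  have hy' : (y : F2)⁻¹ = mk [((1 : Fin 2), false)] := by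
    rw [y, ← mk_single_of, inv_mk]; simp [invRev]
  rcases ofN_eq c with h | h | h | h <;> rw [h]
  · exact Or.inl rfl
  · exact Or.inr (Or.inl rfl)
  · exact Or.inr (Or.inr (Or.inl hx'.symm))
  · exact Or.inr (Or.inr (Or.inr hy'.symm))

lemma nstep (p : List ℕ × List ℕ) (m : M) (h1 : ok p.1) (h2 : ok p.2) :
    ACMove (mk (ofNW p.1), mk (ofNW p.2))
      (mk (ofNW (napp p m).1), mk (ofNW (napp p m).2)) := by
  obtain ⟨p1, p2⟩ := p
  unfold ACMove
  cases m with
  | m1 b =>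
      cases b
      · refine Or.inr (Or.inl ?_)
        dsimp only [napp]
        rw [mk_ofNW_nred (ok_append h1 (ok_ninvRev h2)), mk_ofNW_append,
          mk_ofNW_ninvRev h2]
      · refine Or.inl ?_
        dsimp only [napp]
        rw [mk_ofNW_nred (ok_append h1 h2), mk_ofNW_append]
  | m2 b =>
      cases b
      · refine Or.inr (Or.inr (Or.inr (Or.inl ?_)))
        dsimp only [napp]
        rw [mk_ofNW_nred (ok_append h2 (ok_ninvRev h1)), mk_ofNW_append,
          mk_ofNW_ninvRev h1]
      · refine Or.inr (Or.inr (Or.inl ?_))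
        dsimp only [napp]
        rw [mk_ofNW_nred (ok_append h2 h1), mk_ofNW_append]
  | i1 =>
      refine Or.inr (Or.inr (Or.inr (Or.inr (Or.inl ?_))))
      dsimp only [napp]
      rw [mk_ofNW_ninvRev h1]
  | i2 =>
      refine Or.inr (Or.inr (Or.inr (Or.inr (Or.inr (Or.inl ?_)))))
      dsimp only [napp]
      rw [mk_ofNW_ninvRev h2]
  | c1 a =>
      refine Or.inr (Or.inr (Or.inr (Or.inr (Or.inr (Or.inr
        ⟨mk [ofN a.val], mk_ofN_mem a.val, Or.inl ?_⟩)))))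
      dsimp only [napp]
      have hok : ok (a.val :: p1 ++ [ninv1 a.val]) :=
        ok_cons a.isLt (ok_append h1 (ok_cons ninv1_lt ok_nil))
      rw [mk_ofNW_nred hok, Prod.mk.injEq]
      refine ⟨?_, rfl⟩
      have e1 : (a.val :: p1 ++ [ninv1 a.val]) = [a.val] ++ p1 ++ [ninv1 a.val] := by simp
      rw [e1, mk_ofNW_append, mk_ofNW_append]
      have e3 : mk (ofNW [ninv1 a.val]) = (mk [ofN a.val])⁻¹ := by
        rw [mk_ofN_inv]
        show mk [ofN (ninv1 a.val)] = _
        rw [ofN_ninv1 a.isLt]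
      rw [e3]
      rfl
  | c2 a =>
      refine Or.inr (Or.inr (Or.inr (Or.inr (Or.inr (Or.inr
        ⟨mk [ofN a.val], mk_ofN_mem a.val, Or.inr ?_⟩)))))
      dsimp only [napp]
      have hok : ok (a.val :: p2 ++ [ninv1 a.val]) :=
        ok_cons a.isLt (ok_append h2 (ok_cons ninv1_lt ok_nil))
      rw [mk_ofNW_nred hok, Prod.mk.injEq]
      refine ⟨rfl, ?_⟩
      have e1 : (a.val :: p2 ++ [ninv1 a.val]) = [a.val] ++ p2 ++ [ninv1 a.val] := by simp
      rw [e1, mk_ofNW_append, mk_ofNW_append]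
      have e3 : mk (ofNW [ninv1 a.val]) = (mk [ofN a.val])⁻¹ := by
        rw [mk_ofN_inv]
        show mk [ofN (ninv1 a.val)] = _
        rw [ofN_ninv1 a.isLt]
      rw [e3]
      rfl

def nrun (p : List ℕ × List ℕ) : List M → List ℕ × List ℕ
  | [] => p
  | m :: ms => nrun (napp p m) ms

lemma nrun_acequiv : ∀ (ms : List M) (p : List ℕ × List ℕ), ok p.1 → ok p.2 →
    ACEquiv (mk (ofNW p.1), mk (ofNW p.2))
      (mk (ofNW (nrun p ms).1), mk (ofNW (nrun p ms).2)) := by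
  intro ms
  induction ms with
  | nil => intro p _ _; exact Relation.ReflTransGen.refl
  | cons m ms ih =>
      intro p h1 h2
      obtain ⟨g1, g2⟩ := ok_napp h1 h2 m
      exact Relation.ReflTransGen.head (nstep p m h1 h2) (ih (napp p m) g1 g2)

/-! ### Exponent sums -/

def xe : W → ℤ
  | [] => 0
  | (i, b) :: t => (if i = 0 then (if b then 1 else -1) else 0) + xe t

lemma expSumX_mk (L : W) : expSumX (mk L) = Multiplicative.ofAdd (xe L) := by
  induction L with
  | nil => rfl
  | cons a t ih =>
      obtain ⟨i, b⟩ := a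
      have h : (mk ((i, b) :: t) : F2) = mk [(i, b)] * mk t := by rw [mul_mk]; rfl
      rw [h, MonoidHom.map_mul, ih]
      fin_cases i <;> cases b <;>
        simp [expSumX, xe, FreeGroup.lift_mk, ← ofAdd_add] <;> rfl

def nxe : List ℕ → ℤ
  | [] => 0
  | c :: t => (if c = 0 then 1 else if c = 2 then -1 else 0) + nxe t

lemma nxe_toN (L : W) : nxe (toN L) = xe L := by
  induction L with
  | nil => rfl
  | cons a t ih =>
      obtain ⟨i, b⟩ := a
      show nxe (toN1 (i, b) :: toN t) = xe ((i, b) :: t)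
      rw [nxe, xe, ih]
      fin_cases i <;> cases b <;> rfl

lemma toN_ok (L : W) : ok (toN L) := by
  intro e he
  rw [toN, List.mem_map] at he
  obtain ⟨⟨i, b⟩, _, rfl⟩ := he
  fin_cases i <;> cases b <;> simp [toN1]

lemma ofNW_toN (L : W) : ofNW (toN L) = L := by
  rw [ofNW, toN, List.map_map]
  have : ofN ∘ toN1 = id := by
    funext a
    obtain ⟨i, b⟩ := a
    fin_cases i <;> cases b <;> rfl
  rw [this, List.map_id]

/-! ### Tables and checker -/

def decM : ℕ → ℕ → List M
  | 0, _ => []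
  | _ + 1, 0 => []
  | f + 1, c =>
    (match c % 15 with
     | 1 => M.m1 true | 2 => M.m1 false | 3 => M.m2 true | 4 => M.m2 false
     | 5 => M.i1 | 6 => M.i2
     | 7 => M.c1 0 | 8 => M.c1 1 | 9 => M.c1 2 | 10 => M.c1 3
     | 11 => M.c2 0 | 12 => M.c2 1 | 13 => M.c2 2 | _ => M.c2 3) :: decM f (c / 15)

def encN : List ℕ → ℕ
  | [] => 0
  | c :: t => (c + 1) + 5 * encN t

inductive TR where
  | leaf : TR
  | node (l : TR) (k v : ℕ) (r : TR) : TR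

def findT (c : ℕ) : TR → ℕ
  | .leaf => 0
  | .node l k v r => if c < k then findT c l else if c = k then v else findT c r

def t1 : TR := (TR.node (TR.node (TR.node (TR.node (TR.node (TR.node (TR.node (TR.node (TR.node (TR.node TR.leaf 3 4669912 TR.leaf) 13 900881120 TR.leaf) 17 268450 (TR.node (TR.node TR.leaf 19 316162 TR.leaf) 23 225107 TR.leaf)) 63 13513290095 (TR.node (TR.node (TR.node TR.leaf 67 1027602 TR.leaf) 69 70048692 TR.leaf) 87 68506 (TR.node TR.leaf 99 4618612 TR.leaf))) 117 70048694 (TR.node (TR.node (TR.node (TR.node TR.leaf 119 753507492 TR.leaf) 123 50233832 TR.leaf) 193 13513216811 (TR.node TR.leaf 243 3376616 TR.leaf)) 313 229561196 (TR.node (TR.node (TR.node TR.leaf 317 15304077 TR.leaf) 319 13513216812 TR.leaf) 337 1020271 (TR.node TR.leaf 349 4742442 TR.leaf)))) 437 15304079 (TR.node (TR.node (TR.node (TR.node (TR.node TR.leaf 461 4026763 TR.leaf) 471 4742443 TR.leaf) 499 69166162 (TR.node TR.leaf 587 17986 TR.leaf)) 599 1037492542 (TR.node (TR.node (TR.node TR.leaf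 617 3376619 TR.leaf) 619 2544486511992 TR.leaf) 623 3662601762257 (TR.node TR.leaf 943 202699351436 TR.leaf))) 963 15414041 (TR.node (TR.node (TR.node (TR.node TR.leaf 967 197736013060 TR.leaf) 969 203172526737 TR.leaf) 973 1050730391 (TR.node TR.leaf 1213 3376608 TR.leaf)) 1217 50649288 (TR.node (TR.node (TR.node TR.leaf 1219 824085396508008 TR.leaf) 1223 11302612391 TR.leaf) 1243 753507491 (TR.node TR.leaf 1443 684110312845145 TR.leaf))))) 1493 759739332 (TR.node (TR.node (TR.node (TR.node (TR.node (TR.node TR.leaf 1563 3441717417 TR.leaf) 1567 229447827 TR.leaf) 1569 202699351437 (TR.node (TR.node TR.leaf 1587 15296521 TR.leaf) 1599 1050730392 TR.leaf)) 1687 229447829 (TR.node (TR.node (TR.node TR.leaf 1711 12206773346974610 TR.leaf) 1721 3551987655532 TR.leaf) 1749 69279192 (TR.node TR.leaf 2163 45607354189670 TR.leaf))) 2173 11396089993 (TR.node (TR.node (TR.node (TR.node TR.leaf 2187 53134499415082 TR.leaf) 2211 15414043 TR.leaf) 2221 1050730393 (TR.node TR.leaf 2307 684110312845175 TR.leaf))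 2309 6137502007 (TR.node (TR.node (TR.node TR.leaf 2311 1027603 TR.leaf) 2357 236799176932 TR.leaf) 2359 529606306098882 (TR.node TR.leaf 2371 69279193 TR.leaf)))) 2413 236359076195 (TR.node (TR.node (TR.node (TR.node (TR.node TR.leaf 2423 529606306098898 TR.leaf) 2461 1050730423 TR.leaf) 2471 11302612393 (TR.node TR.leaf 2499 1037369287 TR.leaf)) 2693 13544835115 (TR.node (TR.node (TR.node TR.leaf 2743 12361280947620134 TR.leaf) 2937 1027604 TR.leaf) 2961 759739333 (TR.node TR.leaf 2971 12361280947620133 TR.leaf))) 2999 15560539417 (TR.node (TR.node (TR.node (TR.node TR.leaf 3087 257611 TR.leaf) 3099 233408091367 TR.leaf) 3117 753507494 (TR.node TR.leaf 3119 233408090662 TR.leaf)) 3123 15560539372 (TR.node (TR.node (TR.node TR.leaf 4093 202698252176 TR.leaf) 4343 50649251 TR.leaf) 4693 3443417951 (TR.node TR.leaf 4713 229561166 TR.leaf)))))) 4717 30640029843383836828742181 (TR.node (TR.node (TR.node (TR.node (TR.node (TR.node (TR.node TR.leaf 4719 667359044085312 TR.leaf) 4723 202698252191 TR.leaf) 4813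 15304076 (TR.node (TR.node TR.leaf 4817 40351909062577164685 TR.leaf) 4819 13207901562 TR.leaf)) 4837 45791867084916 (TR.node (TR.node (TR.node TR.leaf 4849 15760954092 TR.leaf) 4867 58658773431 TR.leaf) 4869 5701472937 (TR.node TR.leaf 4873 71136641 TR.leaf))) 6063 70048683 (TR.node (TR.node (TR.node (TR.node TR.leaf 6067 1050730413 TR.leaf) 6069 11302612383 TR.leaf) 6087 3864168 (TR.node TR.leaf 6099 3501121370508 TR.leaf)) 6117 11302612413 (TR.node (TR.node (TR.node TR.leaf 6119 3501121359933 TR.leaf) 6123 15562388141 TR.leaf) 6213 50649296 (TR.node TR.leaf 6217 625789847973269311589 TR.leaf)))) 6219 2658664039109374113 (TR.node (TR.node (TR.node (TR.node (TR.node TR.leaf 6223 824085396508016 TR.leaf) 6243 2544486511991 TR.leaf) 7193 1760397496596125274456776 (TR.node TR.leaf 7213 2318218925558756501 TR.leaf)) 7217 686878006273752 (TR.node (TR.node (TR.node TR.leaf 7219 202698252177 TR.leaf) 7223 11987958336650497 TR.leaf) 7463 15760956207 (TR.node TR.leaf 7467 57962532 TR.leaf))) 7469 50649252 (TR.node (TR.node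 (TR.node (TR.node TR.leaf 7473 169539186207 TR.leaf) 7493 41719323198217954105 TR.leaf) 7693 2318218925558791151 (TR.node TR.leaf 7743 869437992 TR.leaf)) 7813 179328935525992132 (TR.node (TR.node (TR.node TR.leaf 7817 2318218925558683377 TR.leaf) 7819 3443417952 TR.leaf) 7837 183118110417453891 (TR.node TR.leaf 7849 202698252192 TR.leaf))))) 7937 2318218925558683379 (TR.node (TR.node (TR.node (TR.node (TR.node (TR.node TR.leaf 7961 459600447650757552431132728 TR.leaf) 7971 2690320415375194162 TR.leaf) 7999 71136642 (TR.node TR.leaf 8413 12207010333689951 TR.leaf)) 8423 13660258887 (TR.node (TR.node (TR.node TR.leaf 8437 179328935525992357 TR.leaf) 8461 2318218925558756277 TR.leaf) 8471 154547847726997912 (TR.node TR.leaf 8557 30640029843386119753346272 TR.leaf))) 8559 60401457 (TR.node (TR.node (TR.node (TR.node TR.leaf 8561 54277197586672 TR.leaf) 8607 179354694358346272 TR.leaf) 8609 71136657 (TR.node TR.leaf 8621 203656230532 TR.leaf)) 8663 3040473892295 (TR.node (TR.node (TR.node TR.leaf 8673 1380937954432 TR.leaf) 8711 3542299993057 TR.leaf)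 8721 15762493057 (TR.node TR.leaf 8749 1037492442 TR.leaf)))) 10813 117359833106408351630451 (TR.node (TR.node (TR.node (TR.node (TR.node TR.leaf 10817 183118110417458766 TR.leaf) 10819 829298372833987 TR.leaf) 10867 910683925 (TR.node TR.leaf 10869 128744436160952737 TR.leaf)) 10873 625789847973269311588 (TR.node (TR.node (TR.node TR.leaf 10913 183118110417461076 TR.leaf) 10923 15760957207 TR.leaf) 10937 11955262368399457 (TR.node TR.leaf 10961 229561168 TR.leaf))) 10971 202698252193 (TR.node (TR.node (TR.node (TR.node TR.leaf 11057 183118110417458751 TR.leaf) 11059 236414694112 TR.leaf) 11061 15304078 (TR.node TR.leaf 11107 10303189848466522 TR.leaf)) 11109 1235987144737 (TR.node (TR.node (TR.node TR.leaf 11121 71136643 TR.leaf) 11537 1760397496596125274456876 TR.leaf) 11549 9386847719599039673833 (TR.node TR.leaf 11557 814157963800192 TR.leaf))))))) 11559 13473047632 (TR.node (TR.node (TR.node (TR.node (TR.node (TR.node (TR.node (TR.node TR.leaf 11561 229561198 TR.leaf) 11681 60401458 TR.leaf) 11731 71136658 (TR.node (TR.node TR.leaf 11787 2690320415375195872 TR.leaf)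 11799 8972991131873677955737 TR.leaf)) 11857 13577081932 (TR.node (TR.node (TR.node TR.leaf 11859 15587830102 TR.leaf) 11871 1037492443 TR.leaf) 12063 667359044085313 (TR.node TR.leaf 12067 45607108384565 TR.leaf))) 12069 15197709785 (TR.node (TR.node (TR.node (TR.node TR.leaf 12117 169526092300 TR.leaf) 12119 787752305985148 TR.leaf) 12123 598199408799609175648 (TR.node TR.leaf 12307 829298372834002 TR.leaf)) 12309 128744436160952752 (TR.node (TR.node (TR.node TR.leaf 12311 269803 TR.leaf) 12357 3545618309647 TR.leaf) 12359 787752305985132 (TR.node TR.leaf 12371 15562388143 TR.leaf)))) 12413 70048642 (TR.node (TR.node (TR.node (TR.node (TR.node TR.leaf 12423 1039188667 TR.leaf) 12461 50649298 TR.leaf) 12471 824085396508018 (TR.node TR.leaf 12499 233408091217 TR.leaf)) 13443 44490602939020 (TR.node (TR.node (TR.node TR.leaf 13463 880526770 TR.leaf) 13467 202698252179 TR.leaf) 13469 1050730272 (TR.node TR.leaf 13473 380098195 TR.leaf))) 13713 169539185759 (TR.node (TR.node (TR.node (TR.node TR.leaf 13717 50649254 TR.leaf) 13719 169539185547 TR.leaf)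 13723 52516820399009 (TR.node TR.leaf 13743 39879960586640611709 TR.leaf)) 14663 53279814829552 (TR.node (TR.node (TR.node TR.leaf 14673 8582962410730177 TR.leaf) 14687 229561199 TR.leaf) 14711 15760979602 (TR.node TR.leaf 14721 82399142977 TR.leaf))))) 14807 60401459 (TR.node (TR.node (TR.node (TR.node (TR.node (TR.node TR.leaf 14809 1931170017446524507 TR.leaf) 14811 3053074246897 TR.leaf) 14857 71136659 (TR.node (TR.node TR.leaf 14859 598199408791578530377 TR.leaf) 14871 52516820557633 TR.leaf)) 14913 1013180645 (TR.node (TR.node (TR.node TR.leaf 14923 11816284589776991 TR.leaf) 14961 169539186208 TR.leaf) 14971 52516820399008 (TR.node TR.leaf 14999 3501121368367 TR.leaf))) 15193 70048684 (TR.node (TR.node (TR.node (TR.node TR.leaf 15243 11302612369 TR.leaf) 15437 269804 TR.leaf) 15461 9386847719599039673848 (TR.node TR.leaf 15471 39879960586640611708 TR.leaf)) 15499 52516820525617 (TR.node (TR.node (TR.node TR.leaf 15587 50649299 TR.leaf) 15599 1804544419138415031 TR.leaf) 15617 2544486511994 (TR.node TR.leaf 15619 52516820524912 TR.leaf)))) 15623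 3501121368322 (TR.node (TR.node (TR.node (TR.node (TR.node TR.leaf 20343 3040490271551 TR.leaf) 20443 231210626 TR.leaf) 20463 2966040195911 (TR.node TR.leaf 20473 3047587901066 TR.leaf)) 20493 15760955876 (TR.node (TR.node (TR.node TR.leaf 21693 50649131 TR.leaf) 21713 759739331 TR.leaf) 21723 12361280947620131 (TR.node TR.leaf 21743 169539185876 TR.leaf))) 21843 11302612376 (TR.node (TR.node (TR.node (TR.node TR.leaf 22843 12206773346974061 TR.leaf) 23093 11396089991 TR.leaf) 23443 51625761266 (TR.node TR.leaf 23463 3441717416 TR.leaf)) 23473 3040490271566 (TR.node (TR.node (TR.node TR.leaf 23563 229447826 TR.leaf) 23623 15760955891 TR.leaf) 24063 3441717446 (TR.node TR.leaf 24373 1039187891 TR.leaf)))))) 29093 203172526736 (TR.node (TR.node (TR.node (TR.node (TR.node (TR.node (TR.node TR.leaf 29343 529606306098896 TR.leaf) 30313 13513216803 TR.leaf) 30623 233408091266 (TR.node (TR.node TR.leaf 31063 3864176 TR.leaf) 31123 3501121370516 TR.leaf)) 31213 11302612421 (TR.node (TR.node (TR.node TR.leaf 31223 3501121359941 TR.leaf)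 31243 233408090591 TR.leaf) 35343 7039177277285539592063433326 (TR.node TR.leaf 35593 1467279141080383166815977 TR.leaf))) 35943 67675593604495182525766277854534901 (TR.node (TR.node (TR.node (TR.node TR.leaf 35963 105595129902736671996987947126 TR.leaf) 35973 506775774102282192997 TR.leaf) 36063 9078527361003354735912 (TR.node TR.leaf 36123 2692453903949257372 TR.leaf)) 37313 3468248801 (TR.node (TR.node (TR.node TR.leaf 37373 12361280947620582 TR.leaf) 37463 38143370767780 TR.leaf) 37473 177244268846657230 (TR.node TR.leaf 37493 2018922999831455060788030 TR.leaf)))) 38443 11955262367839210 (TR.node (TR.node (TR.node (TR.node (TR.node TR.leaf 38463 2966040217960 TR.leaf) 38473 52023630792 TR.leaf) 38713 60703617 (TR.node TR.leaf 38723 170941384992 TR.leaf)) 38743 38142324745587 (TR.node (TR.node (TR.node TR.leaf 38943 605235157400219649401 TR.leaf) 38993 10373260941102757 TR.leaf) 39063 40349010493348257757 (TR.node TR.leaf 39663 34773283883380252326 TR.leaf))) 39673 52023732042 (TR.node (TR.node (TR.node (TR.node TR.leaf 39913 45607354182920 TR.leaf) 39923 85592157042 TR.leaf) 42063 396089436734128183050849201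 (TR.node TR.leaf 42123 91358285299075374042997 TR.leaf)) 42163 521599258250703787326 (TR.node (TR.node (TR.node TR.leaf 42173 3545471314512 TR.leaf) 43313 136177910415039274795332 TR.leaf) 43373 6517698808882020326932 (TR.node TR.leaf 43663 3468238670 TR.leaf))))) 43673 169521438307 (TR.node (TR.node (TR.node (TR.node (TR.node (TR.node TR.leaf 53943 396089436734128186752796596 TR.leaf) 53993 475209165804701383488567793 TR.leaf) 54063 4511706240299678835051085190302326 (TR.node TR.leaf 54373 30283844997471825911820463 TR.leaf)) 54563 53134499411707 (TR.node (TR.node (TR.node TR.leaf 54623 169521438082 TR.leaf) 54663 40349010493347976626 TR.leaf) 54673 691550729406832 (TR.node TR.leaf 57663 117359642401409729353101 TR.leaf))) 57673 475209165804701383488568241 (TR.node (TR.node (TR.node (TR.node TR.leaf 58913 40354806230627938251 TR.leaf) 58923 2018923004698680967730741 TR.leaf) 60193 605322093459419073846 (TR.node TR.leaf 60243 2018923004698680967730323 TR.leaf)) 60313 105595129902736672829921188063 (TR.node (TR.node (TR.node TR.leaf 60623 52679931737439272366183466838814031 TR.leaf) 62063 15744687817 TR.leaf) 62123 15562387417 (TR.node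 TR.leaf 62413 797764119687292 TR.leaf)))) 62423 27068166287046140692 (TR.node (TR.node (TR.node (TR.node (TR.node TR.leaf 66593 9079831401891286107771 TR.leaf) 66843 134594866979912064515354 TR.leaf) 67193 6894006714761363286466978645 (TR.node TR.leaf 67213 605235157400174554645 TR.leaf)) 67223 10261599432079570 (TR.node (TR.node (TR.node TR.leaf 67313 13182401770 TR.leaf) 67373 11301429445 TR.leaf) 68563 5706143801 (TR.node TR.leaf 68623 11816284618105259 TR.leaf))) 68713 116472907253575815107796 (TR.node (TR.node (TR.node (TR.node TR.leaf 68723 134594866979547445299209 TR.leaf) 68743 40003823163073711360228050309821626620884 TR.leaf) 73313 605322093459419087902 (TR.node TR.leaf 73373 39879960490497876959 TR.leaf)) 73413 15744687802 (TR.node (TR.node (TR.node TR.leaf 73423 367342927 TR.leaf) 74563 618254439886081289466 TR.leaf) 74623 454257676051104909168790867 (TR.node TR.leaf 74913 243861702545 TR.leaf)))))))) 74923 3501537195367 (TR.node (TR.node (TR.node (TR.node (TR.node (TR.node (TR.node (TR.node (TR.node TR.leaf 75943 202698252169 TR.leaf) 75963 13513216804 TR.leaf) 75973 3376609 (TR.node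 (TR.node TR.leaf 76213 759739444 TR.leaf) 76223 12361280947620244 TR.leaf)) 76243 824085396507994 (TR.node (TR.node (TR.node TR.leaf 77163 905134326 TR.leaf) 77173 3659594656563000310447 TR.leaf) 77413 3657925559045 (TR.node TR.leaf 77423 2658664039073683241 TR.leaf))) 77693 71136524 (TR.node (TR.node (TR.node (TR.node TR.leaf 77743 116472907253575814063572 TR.leaf) 78123 787752307882072 TR.leaf) 98593 3040473782651 (TR.node TR.leaf 99843 759738776 TR.leaf)) 101593 51651269276 (TR.node (TR.node (TR.node TR.leaf 101693 3443417501 TR.leaf) 101713 459600447650757552431132726 TR.leaf) 101723 10010385661279691 (TR.node TR.leaf 101743 3040473782876 TR.leaf)))) 102193 229561151 (TR.node (TR.node (TR.node (TR.node (TR.node TR.leaf 102213 40349010493344970286 TR.leaf) 102223 198118523441 TR.leaf) 102313 686878006273751 (TR.node TR.leaf 102373 236414311391 TR.leaf)) 102463 879881601476 (TR.node (TR.node (TR.node TR.leaf 102473 85522094066 TR.leaf) 102493 1067049626 TR.leaf) 108443 1050730256 (TR.node TR.leaf 108463 15760956206 TR.leaf))) 108473 169539185756 (TR.node (TR.node (TR.node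 (TR.node TR.leaf 108563 57962531 TR.leaf) 108623 52516820557631 TR.leaf) 108713 169539186206 (TR.node TR.leaf 108723 52516820399006 TR.leaf)) 108743 233435822126 (TR.node (TR.node (TR.node TR.leaf 109193 759739451 TR.leaf) 109213 9386847719599039673846 TR.leaf) 109223 39879960586640611706 (TR.node TR.leaf 109243 12361280947620251 TR.leaf))))) 109343 824085396508001 (TR.node (TR.node (TR.node (TR.node (TR.node (TR.node TR.leaf 114093 117359642401409729351651 TR.leaf) 114193 34773283883381347526 TR.leaf) 114213 10303170094106291 (TR.node (TR.node TR.leaf 114223 3040473782666 TR.leaf) 114243 179819375049757466 TR.leaf)) 115443 236414343116 (TR.node (TR.node (TR.node TR.leaf 115463 869437991 TR.leaf) 115473 759738791 TR.leaf) 115493 2543087793116 (TR.node TR.leaf 115593 625789847973269311586 TR.leaf))) 116593 34773283883381867276 (TR.node (TR.node (TR.node (TR.node TR.leaf 116843 13041569891 TR.leaf) 117193 40351909062577381991 TR.leaf) 117213 34773283883380250666 (TR.node TR.leaf 117223 51651269291 TR.leaf)) 117313 2318218925558683376 (TR.node (TR.node (TR.node TR.leaf 117373 3040473782891 TR.leaf)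 117813 34773283883380250696 TR.leaf) 118123 1067049641 (TR.node TR.leaf 120193 183118110417458651 TR.leaf)))) 120243 204903883316 (TR.node (TR.node (TR.node (TR.node (TR.node TR.leaf 120313 40351909062577385366 TR.leaf) 120913 396089436734140673270300966 TR.leaf) 120923 906021866 (TR.node TR.leaf 121163 2690320415375194091 TR.leaf)) 121173 1067049866 (TR.node (TR.node (TR.node TR.leaf 121443 45607108384436 TR.leaf) 121493 50815219707116 TR.leaf) 121873 15562386641 (TR.node TR.leaf 145343 667359044085311 TR.leaf))) 145443 13207901561 (TR.node (TR.node (TR.node (TR.node TR.leaf 145463 3040473782696 TR.leaf) 145473 15760954091 TR.leaf) 145493 5701472936 (TR.node TR.leaf 146693 2543087786396 TR.leaf)) 146713 759738821 (TR.node (TR.node (TR.node TR.leaf 146723 2543087783216 TR.leaf) 146743 787752305985146 TR.leaf) 146843 598199408799609175646 (TR.node TR.leaf 151443 203172526728 TR.leaf)))))) 151493 529606306098888 (TR.node (TR.node (TR.node (TR.node (TR.node (TR.node (TR.node TR.leaf 151563 202699351428 TR.leaf) 152163 906021896 TR.leaf) 152173 243972977104200020741 (TR.node (TR.node TR.leaf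 152413 1067049896 TR.leaf) 152423 39879960586105248618 TR.leaf)) 152693 15197709686 (TR.node (TR.node (TR.node TR.leaf 152743 177244268846654876 TR.leaf) 153123 52516820525516 TR.leaf) 154093 1050730271 (TR.node TR.leaf 154343 169539185546 TR.leaf))) 155313 4047071 (TR.node (TR.node (TR.node (TR.node TR.leaf 155623 787752307884266 TR.leaf) 156063 759739496 TR.leaf) 156123 27068166287076225476 (TR.node TR.leaf 156213 824085396508046 TR.leaf)) 156223 787752307873691 (TR.node (TR.node (TR.node TR.leaf 156243 52516820524841 TR.leaf) 176593 35113091637271010887993842215811727631802835665290201 TR.leaf) 176693 3975431665038837017932501683925764582102 (TR.node TR.leaf 176713 300780416019978589004238617499821 TR.leaf)))) 176723 459666464720746359183138622 (TR.node (TR.node (TR.node (TR.node (TR.node TR.leaf 176743 2690320415421091826 TR.leaf) 177943 2564120249727 TR.leaf) 177963 97765306209723493745727 (TR.node TR.leaf 177973 134594866655430334784727 TR.leaf)) 177993 102207977112870723994670722227 (TR.node (TR.node (TR.node TR.leaf 178093 1537881350231991915436267020016052884333703481829705 TR.leaf) 179093 3975431665038837017932501688189150273352 TR.leaf) 179343 576927056718627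 (TR.node TR.leaf 179693 585377362317163481391206973784062835459109648352 TR.leaf))) 179713 205585337726299199854264200481598401381442726 (TR.node (TR.node (TR.node (TR.node TR.leaf 179723 300780416019978589004238618501851 TR.leaf) 179813 23267272662321496834517763163977 TR.leaf) 179873 31299131019232865275432372 (TR.node TR.leaf 180313 2042668656225755552001537 TR.leaf)) 180623 12154596745811122 (TR.node (TR.node (TR.node TR.leaf 185343 114024549173019246349705 TR.leaf) 185593 454257676057203217739321605 TR.leaf) 186563 231210507 (TR.node TR.leaf 186873 52516820383707 TR.leaf))))) 187313 19258235330230 (TR.node (TR.node (TR.node (TR.node (TR.node (TR.node TR.leaf 187373 39879960586105250980 TR.leaf) 187463 1747093608803637226619155 TR.leaf) 187473 454257676051105124494381780 (TR.node TR.leaf 187493 5174278841325063214500667170163030 TR.leaf)) 191593 667359044182960 (TR.node (TR.node (TR.node TR.leaf 191843 572134864830460 TR.leaf) 192193 40351909062576823585 TR.leaf) 192213 40349010493344992335 (TR.node TR.leaf 192223 485697188473585 TR.leaf))) 192313 40351909062402305876 (TR.node (TR.node (TR.node (TR.node TR.leaf 192373 1282833336085 TR.leaf) 193563 3158309051 TR.leaf)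 193623 38146316931867 (TR.node TR.leaf 193713 85590520587 TR.leaf)) 193723 54870649776837 (TR.node (TR.node (TR.node TR.leaf 193743 572194749304962 TR.leaf) 194693 4511706240299678835063579220704007 TR.leaf) 194713 7039177277285539591143121507 (TR.node TR.leaf 194723 40354806230566848382 TR.leaf)))) 194963 710624910761 (TR.node (TR.node (TR.node (TR.node (TR.node TR.leaf 194973 310711040129632 TR.leaf) 194993 3167699865711467857132 TR.leaf) 195193 136177910415050366133776 (TR.node TR.leaf 195243 797074854414007 TR.leaf)) 195313 9078527361003358023382 (TR.node (TR.node (TR.node TR.leaf 195913 117359833106408350533576 TR.leaf) 195923 774770329542 TR.leaf) 196163 12207010333689501 (TR.node TR.leaf 196173 13660056417 TR.leaf))) 198313 1336801848977682617792914130451 (TR.node (TR.node (TR.node (TR.node TR.leaf 198373 50815219754632 TR.leaf) 198413 1760397496596125258006076 TR.leaf) 198423 47374635792 (TR.node TR.leaf 199563 7039177277285539591204110022 TR.leaf)) 199623 6044140028453170437607 (TR.node (TR.node (TR.node TR.leaf 199913 3040473888920 TR.leaf) 199923 530676792908292 TR.leaf) 210193 1336801848977682617796616077776 (TR.node TR.leaf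 210243 15381407662269358001 TR.leaf))))))) 210313 67675483634383091124670530991083576 (TR.node (TR.node (TR.node (TR.node (TR.node (TR.node (TR.node (TR.node TR.leaf 210623 47577028338199531841122 TR.leaf) 210813 40351909062577152982 TR.leaf) 210873 3546215906107 (TR.node (TR.node TR.leaf 210913 117359642401409482593576 TR.leaf) 210923 710624910762 TR.leaf)) 213913 67675483634383091124683025082876626 (TR.node (TR.node (TR.node TR.leaf 213923 4660665635077372 TR.leaf) 215163 1336801848977724772287270125751 TR.leaf) 215173 140802715793985542433622 (TR.node TR.leaf 216443 26405962448942699165167526 TR.leaf))) 216493 305571206026888803609146932 (TR.node (TR.node (TR.node (TR.node TR.leaf 216563 349009089934822326694136466679707 TR.leaf) 216873 102207977111498652991978311307 TR.leaf) 218313 3542554427557 (TR.node TR.leaf 218373 2543099875807 TR.leaf)) 218663 203656606670 (TR.node (TR.node (TR.node TR.leaf 218673 8582962410728932 TR.leaf) 269693 2340706097967203306307786407467968998983061037175596 TR.leaf) 269713 60891472906510720163575598573221109702196 (TR.node TR.leaf 269723 179354694361406121 TR.leaf)))) 269963 57798813511543 (TR.node (TR.node (TR.node (TR.node (TR.node TR.leaf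 269973 1533119656693060859920060833418 TR.leaf) 269993 23068220253479878731544005300240793265005552227445588 TR.leaf) 270193 67675483634383091124683025082874721 (TR.node TR.leaf 270243 8653905850783001 TR.leaf)) 270313 39025094073502804177943436993562771144537158082 (TR.node (TR.node (TR.node TR.leaf 271443 797131974937221 TR.leaf) 271493 6813865140858048266089824088 TR.leaf) 271873 77614182619875948217510007552445463 (TR.node TR.leaf 272693 667359044034457 TR.leaf))) 272743 50815219729207 (TR.node (TR.node (TR.node (TR.node TR.leaf 272813 11955262368396082 TR.leaf) 273123 2543099875582 TR.leaf) 273313 300780416019978589004238614713582 (TR.node TR.leaf 273373 211179991047431190457 TR.leaf)) 273413 9078527361003357742251 (TR.node (TR.node (TR.node TR.leaf 273423 53138323627582 TR.leaf) 276413 105595129902736671996987946851 TR.leaf) 276423 90672113693219476811366 (TR.node TR.leaf 277663 1760397496596179944344501 TR.leaf))))) 277673 69375197898986305534361814082 (TR.node (TR.node (TR.node (TR.node (TR.node (TR.node TR.leaf 288313 2340706097967203306307786410779427977719436947605451 TR.leaf) 288373 30377903214492691347175459869882319378284730708 TR.leaf) 288413 1015133904067427737886494167818024976 (TR.node (TR.node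 TR.leaf 288423 576927056718866 TR.leaf) 288663 53142131662476 TR.leaf)) 288673 67164145132754417707927809710523866 (TR.node (TR.node (TR.node TR.leaf 288913 179354693602826376 TR.leaf) 288923 310711040079457 TR.leaf) 294563 173445144390270661153430529229268456352174201 (TR.node TR.leaf 294623 1537881350233692499450802092372961235639779704439031 TR.leaf))) 294663 23268944123399725409764784876226 (TR.node (TR.node (TR.node (TR.node TR.leaf 294673 9386847719599039218866 TR.leaf) 294913 686891025023001 TR.leaf) 294923 261947866339274477477956319213036383241 (TR.node TR.leaf 296413 710755352376 TR.leaf)) 296423 625789847973269078977 (TR.node (TR.node (TR.node TR.leaf 300943 2601677165854059917301457938439026845282613096 TR.leaf) 300963 349009089934820020315460870092821 TR.leaf) 300973 2318257209453177996 (TR.node TR.leaf 301213 625789847973269245948 TR.leaf)))) 301223 1164212739298069048982040165143152198 (TR.node (TR.node (TR.node (TR.node (TR.node TR.leaf 301243 10070155963311022890160444574265395338983145085692 TR.leaf) 301443 23267272662321488446276460643471 TR.leaf) 301493 1603830934590867169273916285563 (TR.node TR.leaf 301563 265028777669275422366823311696213664063 TR.leaf)) 302693 10303365375345096 (TR.node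 (TR.node (TR.node TR.leaf 302743 600057347446769211749602422228675316179442 TR.leaf) 303123 1053341446395913624650858023432568763188087382 TR.leaf) 307663 114024549173013493127376 (TR.node TR.leaf 307673 2018922999831455021771366 TR.leaf))) 308913 40352188399178403876 (TR.node (TR.node (TR.node (TR.node TR.leaf 308923 6813865140839589418272418241 TR.leaf) 310193 45713818515217 TR.leaf) 310243 41719323198217938592 (TR.node TR.leaf 310313 3542554428817 TR.leaf)) 310623 233408090542 (TR.node (TR.node (TR.node TR.leaf 312063 117359771867689311270067 TR.leaf) 312123 1040591244196331305897707703192 TR.leaf) 312413 1067039842 (TR.node TR.leaf 312423 52523057930467 TR.leaf)))))) 332843 35113091637271945384767601934795854388160892319979895 (TR.node (TR.node (TR.node (TR.node (TR.node (TR.node (TR.node TR.leaf 332943 5235136349022300304731913051392396 TR.leaf) 332963 7039177277285172440727146696 TR.leaf) 332973 136188635847227113101246 (TR.node (TR.node TR.leaf 332993 34773858141797670021 TR.leaf) 334193 41719323198217949729 TR.leaf)) 334213 20554888774225680410823854 (TR.node (TR.node (TR.node TR.leaf 334223 454257676055972627884827854 TR.leaf) 334243 22996794850333323293916000843479 TR.leaf)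 334343 2265785091743060722182230521442291626582460480510091 (TR.node TR.leaf 335343 23268944123399727096544091739895 TR.leaf))) 335593 305397683289390111832049245 (TR.node (TR.node (TR.node (TR.node TR.leaf 335943 228405128415171243160039497676439634895 TR.leaf) 335963 23268944123399725409764738463020 TR.leaf) 335973 117359833106412048999670 (TR.node TR.leaf 336063 136177910415050321039020 TR.leaf)) 336123 34207605338020 (TR.node (TR.node (TR.node TR.leaf 336563 179328935525954695 TR.leaf) 336873 169539184870 TR.leaf) 341593 154550480630176521 (TR.node TR.leaf 341843 261947866339274477477956319213036383454 TR.leaf)))) 342813 15760955759 (TR.node (TR.node (TR.node (TR.node (TR.node TR.leaf 343123 2658664039102011509 TR.leaf) 343563 1804608104673156626 TR.leaf) 343623 454257676055966760374939834 (TR.node TR.leaf 343713 15608868662944969588465616592171 TR.leaf)) 343723 600057347446769211737537357625601927674209 (TR.node (TR.node (TR.node TR.leaf 343743 13261110733567067784148399942619287230408584 TR.leaf) 366443 2042962065425539374147277 TR.leaf) 366493 30283844997471825326570501 (TR.node TR.leaf 366563 1584517459771707197818392764602 TR.leaf))) 366873 102207977111498653011235900709 (TR.node (TR.node (TR.node (TR.node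 TR.leaf 367063 3542554428802 TR.leaf) 367123 1039188652 TR.leaf) 367163 153924820390150927 (TR.node TR.leaf 367173 1380937955677 TR.leaf)) 370163 797131974939576 (TR.node (TR.node (TR.node TR.leaf 370173 1533119656693060859920060833866 TR.leaf) 371413 10303365375347451 TR.leaf) 371423 1164212739298069048982040165143152616 (TR.node TR.leaf 372693 605282825987676058221 TR.leaf))))) 372743 102207977112593841274086273626 (TR.node (TR.node (TR.node (TR.node (TR.node (TR.node TR.leaf 372813 459600447650757552436141341 TR.leaf) 373123 177794769613857544235874312586711860906 TR.leaf) 374563 15760970992 (TR.node TR.leaf 374623 52516820398492 TR.leaf)) 374913 3657629396045 (TR.node (TR.node (TR.node TR.leaf 374923 20554888774248512856732367 TR.leaf) 379093 3047587901044 TR.leaf) 379343 2781288213214530319 (TR.node TR.leaf 379693 3040490271544 TR.leaf))) 379713 231210619 (TR.node (TR.node (TR.node (TR.node TR.leaf 379723 15760955869 TR.leaf) 379813 202699351429 TR.leaf) 379873 753507484 (TR.node TR.leaf 381063 57962644 TR.leaf)) 381123 52516820557744 (TR.node (TR.node (TR.node TR.leaf 381213 169539186319 TR.leaf) 381223 52516820399119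 TR.leaf) 381243 3501121358869 (TR.node TR.leaf 385813 519496268816765579572 TR.leaf)))) 385873 134594867003759757216899 (TR.node (TR.node (TR.node (TR.node (TR.node TR.leaf 385913 45791867092326 TR.leaf) 385923 7960152013482322 TR.leaf) 387063 829298372560822 (TR.node TR.leaf 387123 15608868662944969589980286470281 TR.leaf)) 387413 243841958795 (TR.node (TR.node (TR.node TR.leaf 387423 787845863337697 TR.leaf) 388443 45713818515899 TR.leaf) 388463 15760955774 (TR.node TR.leaf 388473 169539185774 TR.leaf))) 388713 475209165804701383527571424 (TR.node (TR.node (TR.node (TR.node TR.leaf 388723 20554888774248512856732322 TR.leaf) 388743 15608868662944969588465615547947 TR.leaf) 389663 243861849951 (TR.node TR.leaf 389673 1370325918281712114094822 TR.leaf)) 389913 424851576 (TR.node (TR.node (TR.node TR.leaf 389923 598199408797952589491 TR.leaf) 390193 16005597697 TR.leaf) 390243 787845868957072 (TR.node TR.leaf 390623 177244269273475822 TR.leaf)))))))))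

def t2 : TR := (TR.node (TR.node (TR.node (TR.node (TR.node (TR.node (TR.node (TR.node TR.leaf 3 70050412 TR.leaf) 13 13513218770 (TR.node TR.leaf 17 1049644162 TR.leaf)) 19 4744162 (TR.node (TR.node TR.leaf 23 3377357 TR.leaf) 63 241233247370 (TR.node TR.leaf 67 814162288097277 TR.leaf))) 69 1050756192 (TR.node (TR.node (TR.node TR.leaf 87 54277485873151 TR.leaf) 99 69280912 (TR.node TR.leaf 117 1050756194 TR.leaf)) 119 11302623492 (TR.node (TR.node TR.leaf 123 753508232 TR.leaf) 193 202698281561 TR.leaf))) 243 50660366 (TR.node (TR.node (TR.node (TR.node TR.leaf 313 54277449102695 TR.leaf) 317 814161736540565 (TR.node TR.leaf 319 202698281562 TR.leaf)) 337 12418227 (TR.node (TR.node TR.leaf 349 71162442 TR.leaf) 437 827881 TR.leaf)) 461 15744662443 (TR.node (TR.node (TR.node TR.leaf 471 71162443 TR.leaf) 499 69165487 (TR.node TR.leaf 587 15744662444 TR.leaf)) 599 1037482417 (TR.node (TR.node TR.leaf 617 50660369 TR.leaf) 619 11302744992 TR.leaf)))) 623 753516332 (TR.node (TR.node (TR.node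 (TR.node (TR.node TR.leaf 943 3618498710561 TR.leaf) 963 12212434321459166 (TR.node TR.leaf 967 78533470171174512994908793145695731 TR.leaf)) 969 2044083754670064869557287 (TR.node (TR.node TR.leaf 973 15761342891 TR.leaf) 1213 15761342921 TR.leaf)) 1217 48929716622356353194840 (TR.node (TR.node (TR.node TR.leaf 1219 12427844390642250465308840550759148683 TR.leaf) 1223 169539352391 (TR.node TR.leaf 1243 11302623491 TR.leaf)) 1443 1178002052567617694923631897185435977 (TR.node (TR.node TR.leaf 1493 3261981108157090212980 TR.leaf) 1563 618255080153599244645 TR.leaf))) 1567 39203311266247940 (TR.node (TR.node (TR.node (TR.node TR.leaf 1569 3618498710562 TR.leaf) 1587 814161737544102 (TR.node TR.leaf 1599 15761342892 TR.leaf)) 1687 54277449169606 (TR.node (TR.node TR.leaf 1711 1178002052567617694923631897185435978 TR.leaf) 1721 30666484704344230776349657 TR.leaf)) 1749 1039213692 (TR.node (TR.node (TR.node TR.leaf 2163 498234820935796455698667922937833234610032 TR.leaf) 2173 742409508926011439227882 (TR.node TR.leaf 2187 41216937964317585751 TR.leaf)) 2211 12212434321459168 (TR.node (TR.node TR.leaf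 2221 15761342893 TR.leaf) 2307 1187390547879135455020909653442177297 TR.leaf))))) 2309 48929716622132684932882 (TR.node (TR.node (TR.node (TR.node (TR.node (TR.node TR.leaf 2311 814162288097278 TR.leaf) 2357 30666468362433014055532582 (TR.node TR.leaf 2359 758348367215970449981652973829447355507352 TR.leaf)) 2371 1039213693 (TR.node (TR.node TR.leaf 2413 2044083754670064869557288 TR.leaf) 2423 77962213340589683411782660346096317 TR.leaf)) 2461 15761342923 (TR.node (TR.node (TR.node TR.leaf 2471 169539352393 TR.leaf) 2499 15560541037 (TR.node TR.leaf 2693 136272250311337657970485 TR.leaf)) 2743 3120400623181993167094218961563389183384 (TR.node (TR.node TR.leaf 2937 1027786 TR.leaf) 2961 742409508926011439228557 TR.leaf))) 2971 3120400623181993167094218961563389183383 (TR.node (TR.node (TR.node (TR.node TR.leaf 2999 233408115667 TR.leaf) 3087 15761342924 (TR.node TR.leaf 3099 406021867945924767342 TR.leaf)) 3117 11302623494 (TR.node (TR.node TR.leaf 3119 27068124529728317822 TR.leaf) 3123 2544486621632 TR.leaf)) 4093 3040474223426 (TR.node (TR.node (TR.node TR.leaf 4343 759905501 TR.leaf) 4693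 814161736540436 (TR.node TR.leaf 4713 12212426048108486 TR.leaf)) 4717 7045516378292175440 (TR.node (TR.node TR.leaf 4719 9454204631660 TR.leaf) 4723 3040474223441 TR.leaf)))) 4813 186273416 (TR.node (TR.node (TR.node (TR.node (TR.node TR.leaf 4817 45647281550595776392672888208375289900875039481 TR.leaf) 4819 88760775333790486200749397912 (TR.node TR.leaf 4837 869255444126808079091105011550501323431 TR.leaf)) 4849 3285214463516223822942 (TR.node (TR.node TR.leaf 4867 30668201963907070962087385 TR.leaf) 4869 140619642330924236625007 TR.leaf)) 4873 1067436641 (TR.node (TR.node (TR.node TR.leaf 6063 236169936671 TR.leaf) 6067 103504318201127086828117934840 (TR.node TR.leaf 6069 740891393172913563189380 TR.leaf)) 6087 7811633248051584589147 (TR.node (TR.node TR.leaf 6099 144485773489541265351928427107351063924695637 TR.leaf) 6117 31680214822073119811819840 TR.leaf))) 6119 44956940776840627107249553816178142926731761183 (TR.node (TR.node (TR.node (TR.node TR.leaf 6123 15562236266 TR.leaf) 6213 11302623483 (TR.node TR.leaf 6217 169539352413 TR.leaf)) 6219 406021867945924767333 (TR.node (TR.node TR.leaf 6223 169541174891 TR.leaf)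 6243 11302744991 TR.leaf)) 7193 469701091886145020 (TR.node (TR.node (TR.node TR.leaf 7213 131712070010494122990227097332610354042499031900782 TR.leaf) 7217 13038831661902121186366575173257519851477 (TR.node TR.leaf 7219 3040474223427 TR.leaf)) 7223 460023029458606064431310787 (TR.node (TR.node TR.leaf 7463 6900287880075139121874528980 TR.leaf) 7467 9086365577780148735605 TR.leaf)))))) 7469 759905502 (TR.node (TR.node (TR.node (TR.node (TR.node (TR.node (TR.node TR.leaf 7473 2112014321471541320787980 TR.leaf) 7493 2543090286207 (TR.node TR.leaf 7693 2591171843498245590067950026077275786881544532 TR.leaf)) 7743 2044083754670064869555710 (TR.node (TR.node TR.leaf 7813 2086610895518626620729020 TR.leaf) 7817 41216935396741253292 (TR.node TR.leaf 7819 814161736540437 TR.leaf))) 7837 2747795693116083552 (TR.node (TR.node (TR.node TR.leaf 7849 3040474223442 TR.leaf) 7937 183186379541072236 (TR.node TR.leaf 7961 7823975026915016649157 TR.leaf)) 7971 183185293919100157 (TR.node (TR.node TR.leaf 7999 1067436642 TR.leaf) 8413 131712070010494122990227097332610354042499031904157 TR.leaf))) 8423 459997257374298688576798287 (TR.node (TR.node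 (TR.node (TR.node TR.leaf 8437 2747795693116083554 TR.leaf) 8461 684709223258936645890093323125629348513125592228 (TR.node TR.leaf 8471 101359909279415966563234318 TR.leaf)) 8557 7045516378292175860 (TR.node (TR.node TR.leaf 8559 236169936657 TR.leaf) 8561 13038831661902121186366575173257519851478 TR.leaf)) 8607 9454200986782 (TR.node (TR.node (TR.node TR.leaf 8609 1067436657 TR.leaf) 8621 2112320543748462406693732 (TR.node TR.leaf 8663 101359909279415966563234332 TR.leaf)) 8673 5411252075629326496815323182 (TR.node (TR.node TR.leaf 8711 396095942966001256665024232 TR.leaf) 8721 9374642804531443899982 TR.leaf)))) 8749 1037482317 (TR.node (TR.node (TR.node (TR.node (TR.node TR.leaf 10813 31313406125742995 TR.leaf) 10817 287307304115603954224127365054304024523465504167230657 (TR.node TR.leaf 10819 864015405236761961481881069857 TR.leaf)) 10867 30666483824953245905119885 (TR.node (TR.node TR.leaf 10869 31680214822073119811819825 TR.leaf) 10873 38146354293118 TR.leaf)) 10913 172744627919270470110013034501535855695547532 (TR.node (TR.node (TR.node TR.leaf 10923 117174498720773768938507 TR.leaf) 10937 41216935396741253324 (TR.node TR.leaf 10961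 12212426048108488 TR.leaf)) 10971 3040474223443 (TR.node (TR.node TR.leaf 11057 684709223258936225425094669200264957597098427297 TR.leaf) 11059 6900298322884796652748487257 TR.leaf))) 11061 186273418 (TR.node (TR.node (TR.node (TR.node TR.leaf 11107 88760181714411928520207435707 TR.leaf) 11109 81168781134439897452229848457 (TR.node TR.leaf 11121 1067436643 TR.leaf)) 11537 469701091886145050 (TR.node (TR.node TR.leaf 11549 787932228330157 TR.leaf) 11557 2591171843498245590067950026077275786881551282 TR.leaf)) 11559 7811633248051584595882 (TR.node (TR.node (TR.node TR.leaf 11561 12418228 TR.leaf) 11681 236169936658 (TR.node TR.leaf 11731 1067436658 TR.leaf)) 11787 630280065682 (TR.node (TR.node TR.leaf 11799 211890899185779039492 TR.leaf) 11857 140821369583230827112882 TR.leaf))))) 11859 642158993286850068230793009366004728554227 (TR.node (TR.node (TR.node (TR.node (TR.node (TR.node TR.leaf 11871 1037482318 TR.leaf) 12063 42018687245 (TR.node TR.leaf 12067 88760775333790486200749397913 TR.leaf)) 12069 739173254236388336547380 (TR.node (TR.node TR.leaf 12117 81168781134439897452229848682 TR.leaf) 12119 6617735688711080920724405584586762640177969006985789267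 TR.leaf)) 12123 91354920287833072650148 (TR.node (TR.node (TR.node TR.leaf 12307 864015405236761961481881070082 TR.leaf) 12309 360861946419116381701220859544132 (TR.node TR.leaf 12311 236169936673 TR.leaf)) 12357 2499801653965737638151483832 (TR.node (TR.node TR.leaf 12359 26990703573965846854064433905472152022435183863133727 TR.leaf) 12371 15562236268 TR.leaf))) 12413 219014297567748254863 (TR.node (TR.node (TR.node (TR.node TR.leaf 12423 219250561170872511693347173625168752567 TR.leaf) 12461 759905548 (TR.node TR.leaf 12471 169541174893 TR.leaf)) 12499 233406244162 (TR.node (TR.node TR.leaf 13443 630280308770 TR.leaf) 13463 7039038454064966383516756735 TR.leaf)) 13467 3040474223429 (TR.node (TR.node (TR.node TR.leaf 13469 219014297567748254862 TR.leaf) 13473 2499801653965737640881151735 (TR.node TR.leaf 13713 1217531717016598461783447730507 TR.leaf)) 13717 759905504 (TR.node (TR.node TR.leaf 13719 9632384899302751023461895140490070928313037 TR.leaf) 13723 2805462767378411438458685013786859937127886240040745322 TR.leaf)))) 13743 6090328019188871510009 (TR.node (TR.node (TR.node (TR.node (TR.node TR.leaf 14663 5239914038940642457916372284776082 TR.leaf)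 14673 475203222331096797177297515 (TR.node TR.leaf 14687 12418229 TR.leaf)) 14711 103499385877165686805514315332 (TR.node (TR.node TR.leaf 14721 1217531717016598461783447727807 TR.leaf) 14807 236169936659 TR.leaf)) 14809 38146354293132 (TR.node (TR.node (TR.node TR.leaf 14811 520775549870105639272 TR.leaf) 14857 1067436659 (TR.node TR.leaf 14859 91354920287833072650132 TR.leaf)) 14871 9632384899302751023461895140490070928313517 (TR.node (TR.node TR.leaf 14913 5867146867262026196064617090 TR.leaf) 14923 2805462767378411438458685013786859937127886240040745367 TR.leaf))) 14961 475203222331096797177297725 (TR.node (TR.node (TR.node (TR.node TR.leaf 14971 437301882184920303720377211441943719681192362890480258 TR.leaf) 14999 3501093662542 (TR.node TR.leaf 15193 14600953171183216990 TR.leaf)) 15243 642158993286850068230793009366004728554197 (TR.node (TR.node TR.leaf 15437 269986 TR.leaf) 15461 2543090286208 TR.leaf)) 15471 6090328019188871510008 (TR.node (TR.node (TR.node TR.leaf 15499 52516404938242 TR.leaf) 15587 759905549 (TR.node TR.leaf 15599 140802715792206535394892 TR.leaf)) 15617 11302744994 (TR.node (TR.node TR.leaf 15619 140802711552348496239867 TR.leaf)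 15623 625789847965362379532 TR.leaf)))))))

def t3 : TR := (TR.node (TR.node (TR.node (TR.node (TR.node TR.leaf 3 1050757912 TR.leaf) 13 202698283520 (TR.node TR.leaf 17 15744664162 TR.leaf)) 19 71164162 (TR.node (TR.node TR.leaf 23 50661107 TR.leaf) 63 3618498712520 (TR.node TR.leaf 67 52022862927 TR.leaf))) 69 15761368692 (TR.node (TR.node (TR.node TR.leaf 87 3468190861 TR.leaf) 99 1039215412 (TR.node TR.leaf 117 15761368694 TR.leaf)) 119 169539363492 (TR.node (TR.node TR.leaf 123 11302624232 TR.leaf) 193 3040474252811 TR.leaf))) 243 759916616 (TR.node (TR.node (TR.node (TR.node TR.leaf 313 3618496606745 TR.leaf) 317 54277449101315 (TR.node TR.leaf 319 3040474252812 TR.leaf)) 337 12212426125987902 (TR.node (TR.node TR.leaf 349 1067462442 TR.leaf) 437 814161741732526 (TR.node TR.leaf 461 236169962443 TR.leaf))) 471 1067462443 (TR.node (TR.node (TR.node TR.leaf 499 1037484037 TR.leaf) 587 236169962444 (TR.node TR.leaf 599 15562260667 TR.leaf)) 617 759916619 (TR.node (TR.node TR.leaf 619 15565427367 TR.leaf)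 623 1037695157 TR.leaf))))

def t4 : TR := (TR.node (TR.node (TR.node TR.leaf 3 15761370412 TR.leaf) 13 3040474254770 TR.leaf) 17 236169964162 (TR.node (TR.node TR.leaf 19 1067464162 TR.leaf) 23 759917357 TR.leaf))



def find (n : ℕ) (r2 : List ℕ) : List M :=
  decM 64 (findT (encN r2)
    (match n with | 1 => t1 | 2 => t2 | 3 => t3 | 4 => t4 | _ => TR.leaf))

def nr1l (n : ℕ) : List ℕ := 2 :: (List.replicate n 1 ++ 0 :: List.replicate (n + 1) 3)

def check (n : ℕ) (l : List ℕ) : Bool :=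
  if 2 * n + 3 + (nred (2 :: l)).length < 14 then
    decide (nrun (nr1l n, nred (2 :: l)) (find n (nred (2 :: l))) = ([0], [1]))
  else true

def checkL (l : List ℕ) : Bool :=
  if nred l = l ∧ nxe l = 0 then (List.range 4).all fun k => check (k + 1) l
  else true

def checkAll : ℕ → (List ℕ → Bool) → Bool
  | 0, f => f []
  | k + 1, f => f [] && ([0, 1, 2, 3] : List ℕ).all fun c => checkAll k fun l => f (c :: l)

lemma checkAll_sound : ∀ (k : ℕ) (f : List ℕ → Bool), checkAll k f = true →
    ∀ l : List ℕ, ok l → l.length ≤ k → f l = true := by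
  intro k
  induction k with
  | zero =>
      intro f h l _ hl
      have : l = [] := List.length_eq_zero_iff.mp (Nat.le_zero.mp hl)
      subst this; exact h
  | succ k ih =>
      intro f h l hok hl
      rw [checkAll, Bool.and_eq_true, List.all_eq_true] at h
      obtain ⟨h0, h1⟩ := h
      match l with
      | [] => exact h0
      | c :: t =>
          obtain ⟨hc, ht⟩ := ok_of_cons hok
          have htl : t.length ≤ k := by simpa using hl
          have hcmem : c ∈ ([0, 1, 2, 3] : List ℕ) := by
            interval_cases c <;> simp
          exact ih _ (h1 c hcmem) t ht htl

set_option maxRecDepth 100000 in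
set_option maxHeartbeats 10000000 in
lemma master : checkAll 7 checkL = true := by decide

lemma toN1_ofN {c : ℕ} (h : c < 4) : toN1 (ofN c) = c := by
  interval_cases c <;> rfl

lemma toN_ofNW {l : List ℕ} (h : ok l) : toN (ofNW l) = l := by
  rw [toN, ofNW, List.map_map]
  have := List.map_congr_left (l := l) (f := toN1 ∘ ofN) (g := id)
    (fun c hc => toN1_ofN (h c hc))
  rw [this, List.map_id]

end ACA

open FreeGroup

lemma hxA : x = FreeGroup.mk [((0 : Fin 2), true)] := rfl
lemma hyB : y = FreeGroup.mk [((1 : Fin 2), true)] := rfl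
lemma hxinv : (x : F2)⁻¹ = FreeGroup.mk [((0 : Fin 2), false)] := by
  rw [hxA, inv_mk]; simp [invRev]
lemma ypow (k : ℕ) : (y : F2) ^ k = FreeGroup.mk (List.replicate k ((1 : Fin 2), true)) := by
  have h := FreeGroup.mk_toWord (x := (FreeGroup.of (1 : Fin 2)) ^ k)
  rw [FreeGroup.toWord_of_pow] at h
  exact h.symm

/-- The `W`-level first relator word. -/
def R1 (n : ℕ) : ACA.W :=
  ((0 : Fin 2), false) :: (List.replicate n ((1 : Fin 2), true) ++
    ((0 : Fin 2), true) :: List.replicate (n + 1) ((1 : Fin 2), false))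

lemma hr1 (n : ℕ) : x⁻¹ * y ^ n * x * (y ^ (n + 1))⁻¹ = FreeGroup.mk (R1 n) := by
  rw [ypow, ypow, hxinv, hxA, inv_mk, mul_mk, mul_mk, mul_mk]
  congr 1
  simp [R1, invRev, List.map_replicate, List.reverse_replicate]

lemma ofNW_nr1l (n : ℕ) : ACA.ofNW (ACA.nr1l n) = R1 n := by
  simp only [ACA.ofNW, ACA.nr1l, R1, List.map_cons, List.map_append, List.map_replicate]
  rfl

lemma ok_nr1l (n : ℕ) : ACA.ok (ACA.nr1l n) := by
  intro e he
  simp only [ACA.nr1l, List.mem_cons, List.mem_append, List.mem_replicate] at he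
  rcases he with h | h | h
  · omega
  · omega
  · rcases h with h | h
    · omega
    · omega

set_option maxHeartbeats 1000000 in
theorem MS_short_AC_trivial (n : ℕ) (hn1 : 1 ≤ n) (hn7 : n ≤ 7)
    (w : F2) (hwlen : w.norm ≤ 7) (hwx : expSumX w = 1)
    (hlen : presLength (x⁻¹ * y ^ n * x * (y ^ (n + 1))⁻¹, x⁻¹ * w) < 14) :
    ACEquiv (x⁻¹ * y ^ n * x * (y ^ (n + 1))⁻¹, x⁻¹ * w) (x, y) := by
  classical
  set L : ACA.W := w.toWord with hLdef
  have hL : w = FreeGroup.mk L := FreeGroup.mk_toWord.symm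
  have hredL : FreeGroup.reduce L = L := FreeGroup.reduce_toWord w
  have hlenL : L.length ≤ 7 := hwlen
  have hxe : ACA.xe L = 0 := by
    have h1 := ACA.expSumX_mk L
    rw [← hL] at h1
    rw [h1] at hwx
    simpa using hwx
  -- the ℕ-encoded word
  set l : List ℕ := ACA.toN L with hldef
  have hok : ACA.ok l := ACA.toN_ok L
  have hofl : ACA.ofNW l = L := ACA.ofNW_toN L
  have hllen : l.length ≤ 7 := by
    rw [hldef, ACA.toN, List.length_map]; exact hlenL
  have hnred : ACA.nred l = l := by
    have h1 : ACA.ofNW (ACA.nred l) = ACA.ofNW l := by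
      rw [ACA.ofNW_nred l hok, hofl]; exact hredL
    calc ACA.nred l = ACA.toN (ACA.ofNW (ACA.nred l)) :=
            (ACA.toN_ofNW (ACA.ok_nred hok)).symm
      _ = ACA.toN (ACA.ofNW l) := by rw [h1]
      _ = l := ACA.toN_ofNW hok
  have hnxe : ACA.nxe l = 0 := by rw [hldef, ACA.nxe_toN, hxe]
  have hok2 : ACA.ok ((2 : ℕ) :: l) := ACA.ok_cons (by norm_num) hok
  -- second relator bridge
  have hr2w : ACA.ofNW (ACA.nred (2 :: l)) = FreeGroup.reduce (((0 : Fin 2), false) :: L) := by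
    rw [ACA.ofNW_nred _ hok2]
    congr 1
    show ACA.ofN 2 :: ACA.ofNW l = _
    rw [hofl]; rfl
  have hr2 : x⁻¹ * w = FreeGroup.mk (((0 : Fin 2), false) :: L) := by
    rw [hL, hxinv, mul_mk]; rfl
  -- length bridge
  have hlen' : (FreeGroup.reduce (R1 n)).length
      + (FreeGroup.reduce (((0 : Fin 2), false) :: L)).length < 14 := by
    rw [hr1, hr2] at hlen
    simpa [presLength, FreeGroup.norm, FreeGroup.toWord_mk] using hlen
  have hlen2 : (ACA.nred (2 :: l)).length
      = (FreeGroup.reduce (((0 : Fin 2), false) :: L)).length := by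
    rw [← hr2w, ACA.ofNW, List.length_map]
  -- rule out n ≥ 5
  have hn4 : n ≤ 4 := by
    by_contra hgt
    push_neg at hgt
    have h13 : 13 ≤ (FreeGroup.reduce (R1 n)).length := by
      interval_cases n <;> decide
    have hne : FreeGroup.reduce (((0 : Fin 2), false) :: L) ≠ [] := by
      intro h0
      have hmk1 : FreeGroup.mk (((0 : Fin 2), false) :: L) = 1 := by
        have := FreeGroup.reduce.exact (L₁ := ((0 : Fin 2), false) :: L) (L₂ := [])
          (by rw [h0]; rfl)
        rw [this]; rfl
      have hE := ACA.expSumX_mk (((0 : Fin 2), false) :: L)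
      rw [hmk1, _root_.map_one] at hE
      have hxval : ACA.xe (((0 : Fin 2), false) :: L) = -1 := by
        show (if (0 : Fin 2) = 0 then (if false then 1 else -1) else 0) + ACA.xe L = -1
        rw [hxe]; simp
      rw [hxval] at hE
      exact absurd hE (by decide)
    have : 1 ≤ (FreeGroup.reduce (((0 : Fin 2), false) :: L)).length :=
      Nat.one_le_iff_ne_zero.mpr (fun h => hne (List.length_eq_zero_iff.mp h))
    omega
  have hr1len : (FreeGroup.reduce (R1 n)).length = 2 * n + 3 := by
    interval_cases n <;> decide
  -- get the checked trace
  have hchL : ACA.checkL l = true :=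
    ACA.checkAll_sound 7 ACA.checkL ACA.master l hok hllen
  rw [ACA.checkL, if_pos ⟨hnred, hnxe⟩, List.all_eq_true] at hchL
  have hch : ACA.check n l = true := by
    have := hchL (n - 1) (by simp [List.mem_range]; omega)
    rwa [Nat.sub_add_cancel hn1] at this
  have hcond : 2 * n + 3 + (ACA.nred (2 :: l)).length < 14 := by omega
  rw [ACA.check, if_pos hcond] at hch
  have hrun := of_decide_eq_true hch
  have hokr2 : ACA.ok (ACA.nred (2 :: l)) := ACA.ok_nred hok2
  have heq := ACA.nrun_acequiv (ACA.find n (ACA.nred (2 :: l)))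
    (ACA.nr1l n, ACA.nred (2 :: l)) (ok_nr1l n) hokr2
  rw [hrun] at heq
  dsimp only at heq
  rw [ofNW_nr1l] at heq
  have e2 : FreeGroup.mk (ACA.ofNW (ACA.nred (2 :: l)))
      = FreeGroup.mk (((0 : Fin 2), false) :: L) := by
    rw [hr2w]
    exact FreeGroup.reduce.self
  rw [e2] at heq
  have ex : FreeGroup.mk (ACA.ofNW [0]) = x := rfl
  have ey : FreeGroup.mk (ACA.ofNW [1]) = y := rfl
  rw [ex, ey] at heq
  rw [hr1 n, hr2]
  have e1 : FreeGroup.mk (R1 n) = FreeGroup.mk (FreeGroup.reduce (R1 n)) :=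
    FreeGroup.reduce.self.symm
  exact heq
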